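/- arXiv:0810.4437 — 3 statements merged into one kernel-verified Lean document; each statement's English description precedes it below -/
import Mathlib

section
/- Let U, V, W be real Hilbert spaces and let A : U → V and B : V → W be bounded linear operators such that the range of A equals the kernel of B (exactness at V) and the range of B is closed in W. Then the bounded operator Δ := A ∘ A* + B* ∘ B : V → V is bijective, i.e. it is a continuous linear isomorphism of V. -/
open ContinuousLinearMap Submodule

local notation "⟪" x ", " y "⟫" => @inner ℝ _ _ x y

/-- A bounded operator with closed range admits preimages with norm control. -/
lemma exists_norm_le_of_closedRange
    {V W : Type*}
    [NormedAddCommGroup V] [NormedSpace ℝ V] [CompleteSpace V]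
    [NormedAddCommGroup W] [NormedSpace ℝ W] [CompleteSpace W]
    (B : V →L[ℝ] W) (hclosed : IsClosed (LinearMap.range (B : V →ₗ[ℝ] W) : Set W)) :
    ∃ C > 0, ∀ w ∈ LinearMap.range (B : V →ₗ[ℝ] W), ∃ x, B x = w ∧ ‖x‖ ≤ C * ‖w‖ := by
  haveI : CompleteSpace (LinearMap.range (B : V →ₗ[ℝ] W)) := hclosed.completeSpace_coe
  set B' : V →L[ℝ] (LinearMap.range (B : V →ₗ[ℝ] W)) :=
    B.codRestrict (LinearMap.range (B : V →ₗ[ℝ] W)) (fun x => LinearMap.mem_range_self _ x)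
  have hsurj : Function.Surjective B' := by
    rintro ⟨w, x, rfl⟩
    exact ⟨x, rfl⟩
  obtain ⟨C, hC, h⟩ := B'.exists_preimage_norm_le hsurj
  refine ⟨C, hC, fun w hw => ?_⟩
  obtain ⟨x, hx, hxn⟩ := h ⟨w, hw⟩
  exact ⟨x, congrArg Subtype.val hx, hxn⟩

set_option maxHeartbeats 2000000 in
/-- If `A : U → V` and `B : V → W` are bounded operators between real Hilbert
spaces with `range A = ker B` (exactness at `V`) and `range B` closed in `W`,
then the "Laplacian" `Δ = A ∘ A* + B* ∘ B : V → V` is bijective. -/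
theorem laplacian_bijective_of_exact_of_closedRange
    {U V W : Type*}
    [NormedAddCommGroup U] [InnerProductSpace ℝ U] [CompleteSpace U]
    [NormedAddCommGroup V] [InnerProductSpace ℝ V] [CompleteSpace V]
    [NormedAddCommGroup W] [InnerProductSpace ℝ W] [CompleteSpace W]
    (A : U →L[ℝ] V) (B : V →L[ℝ] W)
    (hexact : LinearMap.range (A : U →ₗ[ℝ] V) = LinearMap.ker (B : V →ₗ[ℝ] W))
    (hclosed : IsClosed (LinearMap.range (B : V →ₗ[ℝ] W) : Set W)) :
    Function.Bijective
      (A.comp (ContinuousLinearMap.adjoint A) +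
        (ContinuousLinearMap.adjoint B).comp B) := by
  set Δ : V →L[ℝ] V :=
    A.comp (ContinuousLinearMap.adjoint A) + (ContinuousLinearMap.adjoint B).comp B with hΔ
  have hkerB : IsClosed ((LinearMap.ker (B : V →ₗ[ℝ] W) : Submodule ℝ V) : Set V) :=
    ContinuousLinearMap.isClosed_ker B
  have hrangeA : IsClosed ((LinearMap.range (A : U →ₗ[ℝ] V) : Submodule ℝ V) : Set V) := by
    rw [hexact]; exact hkerB
  -- the quadratic form identity
  have hquad : ∀ v : V, ⟪Δ v, v⟫ = ‖(ContinuousLinearMap.adjoint A) v‖ ^ 2 + ‖B v‖ ^ 2 := by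
    intro v
    have h1 : ⟪A ((ContinuousLinearMap.adjoint A) v), v⟫
        = ‖(ContinuousLinearMap.adjoint A) v‖ ^ 2 := by
      rw [real_inner_comm, ← ContinuousLinearMap.adjoint_inner_left,
        real_inner_self_eq_norm_sq]
    have h2 : ⟪(ContinuousLinearMap.adjoint B) (B v), v⟫ = ‖B v‖ ^ 2 := by
      rw [ContinuousLinearMap.adjoint_inner_left, real_inner_self_eq_norm_sq]
    simp only [hΔ, ContinuousLinearMap.add_apply, ContinuousLinearMap.comp_apply,
      inner_add_left, h1, h2]
  -- bound 1: on range A, the adjoint of A is bounded below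
  obtain ⟨C₁, hC₁, hA⟩ : ∃ C > 0, ∀ v ∈ LinearMap.range (A : U →ₗ[ℝ] V), ∃ x, A x = v ∧ ‖x‖ ≤ C * ‖v‖ :=
    exists_norm_le_of_closedRange A hrangeA
  have hb1 : ∀ v ∈ LinearMap.range (A : U →ₗ[ℝ] V), ‖v‖ ≤ C₁ * ‖(ContinuousLinearMap.adjoint A) v‖ := by
    intro v hv
    obtain ⟨x, hx, hxn⟩ := hA v hv
    rcases eq_or_ne v 0 with rfl | hv0
    · simp [mul_nonneg hC₁.le (norm_nonneg _)]
    have : ‖v‖ ^ 2 ≤ C₁ * ‖(ContinuousLinearMap.adjoint A) v‖ * ‖v‖ := by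
      calc ‖v‖ ^ 2 = ⟪v, v⟫ := (real_inner_self_eq_norm_sq v).symm
        _ = ⟪x, (ContinuousLinearMap.adjoint A) v⟫ := by
            rw [← hx, ContinuousLinearMap.adjoint_inner_right]
        _ ≤ ‖x‖ * ‖(ContinuousLinearMap.adjoint A) v‖ := real_inner_le_norm _ _
        _ ≤ (C₁ * ‖v‖) * ‖(ContinuousLinearMap.adjoint A) v‖ := by
            exact mul_le_mul_of_nonneg_right hxn (norm_nonneg _)
        _ = C₁ * ‖(ContinuousLinearMap.adjoint A) v‖ * ‖v‖ := by ring
    have hvpos : (0:ℝ) < ‖v‖ := norm_pos_iff.mpr hv0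
    nlinarith [this, hvpos]
  -- bound 2: on (ker B)ᗮ, B is bounded below
  obtain ⟨C₂, hC₂, hB⟩ : ∃ C > 0, ∀ w ∈ LinearMap.range (B : V →ₗ[ℝ] W), ∃ x, B x = w ∧ ‖x‖ ≤ C * ‖w‖ :=
    exists_norm_le_of_closedRange B hclosed
  have hb2 : ∀ v ∈ (LinearMap.ker (B : V →ₗ[ℝ] W) : Submodule ℝ V)ᗮ, ‖v‖ ≤ C₂ * ‖B v‖ := by
    intro v hv
    obtain ⟨x, hx, hxn⟩ := hB (B v) (LinearMap.mem_range_self _ v)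
    rcases eq_or_ne v 0 with rfl | hv0
    · simp [mul_nonneg hC₂.le (norm_nonneg _)]
    have hmem : v - x ∈ LinearMap.ker (B : V →ₗ[ℝ] W) := by
      simp [LinearMap.mem_ker, map_sub, hx]
    have hin : ⟪v - x, v⟫ = 0 := hv _ hmem
    have : ‖v‖ ^ 2 ≤ C₂ * ‖B v‖ * ‖v‖ := by
      calc ‖v‖ ^ 2 = ⟪v, v⟫ := (real_inner_self_eq_norm_sq v).symm
        _ = ⟪x, v⟫ := by
            have := hin
            rw [inner_sub_left] at this
            linarith
        _ ≤ ‖x‖ * ‖v‖ := real_inner_le_norm _ _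
        _ ≤ (C₂ * ‖B v‖) * ‖v‖ := mul_le_mul_of_nonneg_right hxn (norm_nonneg _)
        _ = C₂ * ‖B v‖ * ‖v‖ := by ring
    have hvpos : (0:ℝ) < ‖v‖ := norm_pos_iff.mpr hv0
    nlinarith [this, hvpos]
  -- coercivity
  haveI : CompleteSpace (LinearMap.ker (B : V →ₗ[ℝ] W) : Submodule ℝ V) := hkerB.completeSpace_coe
  set K : Submodule ℝ V := LinearMap.ker (B : V →ₗ[ℝ] W)
  set c : ℝ := min (1 / C₁ ^ 2) (1 / C₂ ^ 2) with hc
  have hcpos : 0 < c := lt_min (by positivity) (by positivity)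
  have hcoer : ∀ v : V, c * ‖v‖ ^ 2 ≤ ⟪Δ v, v⟫ := by
    intro v
    obtain ⟨v₁, hv₁K, v₂, hv₂K, hsum, hpy⟩ :
        ∃ v₁ ∈ K, ∃ v₂ ∈ Kᗮ, v₁ + v₂ = v ∧ ‖v‖ ^ 2 = ‖v₁‖ ^ 2 + ‖v₂‖ ^ 2 := by
      refine ⟨orthogonalProjection K v, (orthogonalProjection K v).2,
        orthogonalProjection Kᗮ v, (orthogonalProjection Kᗮ v).2,
        K.starProjection_add_starProjection_orthogonal v, ?_⟩
      simpa using norm_sq_eq_add_norm_sq_projection v K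
    -- A† v₂ = 0
    have hAv₂ : (ContinuousLinearMap.adjoint A) v₂ = 0 := by
      rw [← inner_self_eq_zero (𝕜 := ℝ)]
      rw [ContinuousLinearMap.adjoint_inner_left]
      have hmem : A ((ContinuousLinearMap.adjoint A) v₂) ∈ K := by
        rw [← hexact]; exact LinearMap.mem_range_self _ _
      rw [real_inner_comm]
      exact hv₂K _ hmem
    have hBv₁ : B v₁ = 0 := hv₁K
    have hAv : (ContinuousLinearMap.adjoint A) v = (ContinuousLinearMap.adjoint A) v₁ := by
      rw [← hsum, map_add, hAv₂, add_zero]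
    have hBv : B v = B v₂ := by
      rw [← hsum, map_add, hBv₁, zero_add]
    have h1 : ‖v₁‖ ≤ C₁ * ‖(ContinuousLinearMap.adjoint A) v₁‖ := by
      apply hb1
      rw [hexact]; exact hv₁K
    have h2 : ‖v₂‖ ≤ C₂ * ‖B v₂‖ := hb2 v₂ hv₂K
    rw [hquad, hAv, hBv, hpy]
    have e1 : c * ‖v₁‖ ^ 2 ≤ ‖(ContinuousLinearMap.adjoint A) v₁‖ ^ 2 := by
      have h1' : ‖v₁‖ ^ 2 ≤ C₁ ^ 2 * ‖(ContinuousLinearMap.adjoint A) v₁‖ ^ 2 := by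
        have := mul_self_le_mul_self (norm_nonneg v₁) h1
        nlinarith [norm_nonneg v₁, norm_nonneg ((ContinuousLinearMap.adjoint A) v₁)]
      have hcle : c ≤ 1 / C₁ ^ 2 := min_le_left _ _
      have hC₁2 : (0:ℝ) < C₁ ^ 2 := by positivity
      calc c * ‖v₁‖ ^ 2 ≤ (1 / C₁ ^ 2) * ‖v₁‖ ^ 2 := by
            exact mul_le_mul_of_nonneg_right hcle (by positivity)
        _ ≤ (1 / C₁ ^ 2) * (C₁ ^ 2 * ‖(ContinuousLinearMap.adjoint A) v₁‖ ^ 2) := by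
            exact mul_le_mul_of_nonneg_left h1' (by positivity)
        _ = ‖(ContinuousLinearMap.adjoint A) v₁‖ ^ 2 := by field_simp
    have e2 : c * ‖v₂‖ ^ 2 ≤ ‖B v₂‖ ^ 2 := by
      have h2' : ‖v₂‖ ^ 2 ≤ C₂ ^ 2 * ‖B v₂‖ ^ 2 := by
        nlinarith [norm_nonneg v₂, norm_nonneg (B v₂)]
      have hcle : c ≤ 1 / C₂ ^ 2 := min_le_right _ _
      calc c * ‖v₂‖ ^ 2 ≤ (1 / C₂ ^ 2) * ‖v₂‖ ^ 2 :=
            mul_le_mul_of_nonneg_right hcle (by positivity)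
        _ ≤ (1 / C₂ ^ 2) * (C₂ ^ 2 * ‖B v₂‖ ^ 2) :=
            mul_le_mul_of_nonneg_left h2' (by positivity)
        _ = ‖B v₂‖ ^ 2 := by field_simp
    linarith [e1, e2]
  -- Δ is bounded below
  have hbelow : ∀ v : V, c * ‖v‖ ≤ ‖Δ v‖ := by
    intro v
    rcases eq_or_ne v 0 with rfl | hv0
    · simp
    have hvpos : (0:ℝ) < ‖v‖ := norm_pos_iff.mpr hv0
    have h := hcoer v
    have h2 : ⟪Δ v, v⟫ ≤ ‖Δ v‖ * ‖v‖ := real_inner_le_norm _ _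
    have : c * ‖v‖ * ‖v‖ ≤ ‖Δ v‖ * ‖v‖ := by nlinarith
    exact le_of_mul_le_mul_right this hvpos
  have hinj : Function.Injective Δ := by
    intro x y hxy
    have h0 : Δ (x - y) = 0 := by rw [map_sub, hxy, sub_self]
    have := hbelow (x - y)
    rw [h0, norm_zero] at this
    have : ‖x - y‖ ≤ 0 := by
      by_contra h
      push_neg at h
      nlinarith
    have : x - y = 0 := norm_le_zero_iff.mp this
    exact sub_eq_zero.mp this
  refine ⟨hinj, ?_⟩
  -- surjectivity: range Δ is closed and has trivial orthogonal complement
  have hrangeclosed : IsClosed ((LinearMap.range (Δ : V →ₗ[ℝ] V) : Submodule ℝ V) : Set V) := by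
    have hanti : AntilipschitzWith (⟨c, hcpos.le⟩ : NNReal)⁻¹ Δ := by
      apply ContinuousLinearMap.antilipschitz_of_bound
      intro x
      have hx := hbelow x
      have key : ‖x‖ ≤ c⁻¹ * ‖Δ x‖ := by
        rw [← div_eq_inv_mul, le_div_iff₀ hcpos]
        nlinarith
      exact key
    have := hanti.isClosed_range Δ.uniformContinuous
    simpa [Set.range, LinearMap.coe_range] using this
  haveI : CompleteSpace (LinearMap.range (Δ : V →ₗ[ℝ] V) : Submodule ℝ V) := hrangeclosed.completeSpace_coe
  have horth : (LinearMap.range (Δ : V →ₗ[ℝ] V) : Submodule ℝ V)ᗮ = ⊥ := by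
    rw [Submodule.eq_bot_iff]
    intro w hw
    have h0 : ⟪Δ w, w⟫ = 0 := hw _ (LinearMap.mem_range_self _ w)
    have := hcoer w
    rw [h0] at this
    have : ‖w‖ ^ 2 ≤ 0 := by nlinarith
    have : ‖w‖ = 0 := by nlinarith [norm_nonneg w, sq_nonneg (‖w‖)]
    exact norm_eq_zero.mp this
  have htop : (LinearMap.range (Δ : V →ₗ[ℝ] V) : Submodule ℝ V) = ⊤ :=
    Submodule.orthogonal_eq_bot_iff.mp horth
  exact LinearMap.range_eq_top.mp htop
end

section
/- Let U, V, W be real Hilbert spaces and let A : U → V and B : V → W be bounded linear operators such that range A = ker B and range B is closed in W. Then there exists ε > 0 such that for all bounded linear operators A' : U → V and B' : V → W with ‖A' − A‖ < ε and ‖B' − B‖ < ε in operator norm, the bounded operator A ∘ (A')* + B* ∘ B' : V → V is bijective. In particular, for such A', B', every c ∈ V satisfying A((A')* c) = 0 and B' c = 0 must be zero. -/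
open RealInnerProductSpace ContinuousLinearMap

lemma key_bounded_preimage
    {X Y : Type*}
    [NormedAddCommGroup X] [InnerProductSpace ℝ X] [CompleteSpace X]
    [NormedAddCommGroup Y] [InnerProductSpace ℝ Y] [CompleteSpace Y]
    (T : X →L[ℝ] Y) (h : IsClosed (LinearMap.range (T : X →ₗ[ℝ] Y) : Set Y)) :
    ∃ C > (0:ℝ), ∀ y ∈ LinearMap.range (T : X →ₗ[ℝ] Y), ∃ x, T x = y ∧ ‖x‖ ≤ C * ‖y‖ := by
  set S : Submodule ℝ Y := LinearMap.range (T : X →ₗ[ℝ] Y) with hS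
  haveI : CompleteSpace S := h.completeSpace_coe
  set K : Submodule ℝ X := (LinearMap.ker (T : X →ₗ[ℝ] Y))ᗮ with hK
  haveI : CompleteSpace K := (Submodule.isClosed_orthogonal _).completeSpace_coe
  haveI : CompleteSpace (LinearMap.ker (T : X →ₗ[ℝ] Y)) := T.isClosed_ker.completeSpace_coe
  have hmem : ∀ x : K, T x ∈ S := fun x => LinearMap.mem_range_self _ _
  set T₀ : K →L[ℝ] S := (T.comp K.subtypeL).codRestrict S hmem with hT₀
  have hker : LinearMap.ker (T₀ : K →ₗ[ℝ] S) = ⊥ := by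
    rw [Submodule.eq_bot_iff]
    rintro ⟨x, hx⟩ hx0
    have hTx : T x = 0 := by
      have := congrArg (Subtype.val) (show T₀ ⟨x, hx⟩ = 0 from hx0)
      exact this
    have : x ∈ LinearMap.ker (T : X →ₗ[ℝ] Y) ⊓ (LinearMap.ker (T : X →ₗ[ℝ] Y))ᗮ := ⟨hTx, hx⟩
    rw [Submodule.inf_orthogonal_eq_bot] at this
    simpa using this
  have hrange : LinearMap.range (T₀ : K →ₗ[ℝ] S) = ⊤ := by
    rw [LinearMap.range_eq_top]
    rintro ⟨y, x, hx⟩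
    refine ⟨⟨x - (Submodule.orthogonalProjectionOnto (LinearMap.ker (T : X →ₗ[ℝ] Y)) x : X), by
      exact Submodule.sub_starProjection_mem_orthogonal x⟩, ?_⟩
    apply Subtype.ext
    have h2 : T (Submodule.orthogonalProjectionOnto (LinearMap.ker (T : X →ₗ[ℝ] Y)) x : X) = 0 :=
      (Submodule.orthogonalProjectionOnto (LinearMap.ker (T : X →ₗ[ℝ] Y)) x).2
    change T (x - (Submodule.orthogonalProjectionOnto (LinearMap.ker (T : X →ₗ[ℝ] Y)) x : X)) = y
    rw [map_sub, h2, sub_zero]; exact hx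
  set e : K ≃L[ℝ] S := ContinuousLinearEquiv.ofBijective T₀ hker hrange with he
  refine ⟨‖(e.symm : S →L[ℝ] K)‖ + 1, by positivity, ?_⟩
  intro y hy
  refine ⟨(e.symm ⟨y, hy⟩ : X), ?_, ?_⟩
  · have : T₀ (e.symm ⟨y, hy⟩) = ⟨y, hy⟩ := e.apply_symm_apply ⟨y, hy⟩
    have := congrArg Subtype.val this
    exact this
  · calc ‖(e.symm ⟨y, hy⟩ : X)‖ = ‖e.symm ⟨y, hy⟩‖ := rfl
      _ ≤ ‖(e.symm : S →L[ℝ] K)‖ * ‖(⟨y, hy⟩ : S)‖ := (e.symm : S →L[ℝ] K).le_opNorm _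
      _ ≤ (‖(e.symm : S →L[ℝ] K)‖ + 1) * ‖y‖ := by
          have hn : ‖(⟨y, hy⟩ : S)‖ = ‖y‖ := rfl
          rw [hn]
          exact mul_le_mul_of_nonneg_right (by linarith) (norm_nonneg _)

lemma bijective_of_inner_coercive
    {V : Type*} [NormedAddCommGroup V] [InnerProductSpace ℝ V] [CompleteSpace V]
    (L : V →L[ℝ] V) {α : ℝ} (hα : 0 < α)
    (h : ∀ v, α * (‖v‖ * ‖v‖) ≤ ⟪L v, v⟫) : Function.Bijective L := by
  have below : ∀ v, α * ‖v‖ ≤ ‖L v‖ := by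
    intro v
    by_cases hv : 0 < ‖v‖
    · refine (mul_le_mul_iff_of_pos_right hv).mp ?_
      calc α * ‖v‖ * ‖v‖ = α * (‖v‖ * ‖v‖) := by ring
        _ ≤ ⟪L v, v⟫ := h v
        _ ≤ ‖L v‖ * ‖v‖ := real_inner_le_norm _ _
    · have : v = 0 := by simpa using hv
      simp [this]
  have anti : AntilipschitzWith (⟨α⁻¹, by positivity⟩ : NNReal) L := by
    refine L.antilipschitz_of_bound fun x => ?_
    have h2 := below x
    show ‖x‖ ≤ α⁻¹ * ‖L x‖
    have h3 : α⁻¹ * α = 1 := inv_mul_cancel₀ hα.ne'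
    nlinarith [inv_pos.mpr hα, norm_nonneg (L x)]
  have hinj : Function.Injective L := anti.injective
  refine ⟨hinj, ?_⟩
  have hcl : IsClosed (LinearMap.range (L : V →ₗ[ℝ] V) : Set V) :=
    by rw [LinearMap.coe_range]; exact anti.isClosed_range L.uniformContinuous
  haveI : CompleteSpace (LinearMap.range (L : V →ₗ[ℝ] V)) := hcl.completeSpace_coe
  have htop : LinearMap.range (L : V →ₗ[ℝ] V) = ⊤ := by
    rw [← (LinearMap.range (L : V →ₗ[ℝ] V)).orthogonal_orthogonal, Submodule.eq_top_iff']
    intro v w hw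
    have hw0 : w = 0 := by
      have h1 : ⟪L w, w⟫ = 0 := hw _ ⟨w, rfl⟩
      have h2 := h w
      rw [h1] at h2
      have : ‖w‖ * ‖w‖ ≤ 0 := by nlinarith
      have : ‖w‖ = 0 := by nlinarith [norm_nonneg w, mul_self_nonneg ‖w‖]
      simpa using this
    simp [hw0]
  exact LinearMap.range_eq_top.mp htop

lemma coercive_of_exact
    {U V W : Type*}
    [NormedAddCommGroup U] [InnerProductSpace ℝ U] [CompleteSpace U]
    [NormedAddCommGroup V] [InnerProductSpace ℝ V] [CompleteSpace V]
    [NormedAddCommGroup W] [InnerProductSpace ℝ W] [CompleteSpace W]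
    (A : U →L[ℝ] V) (B : V →L[ℝ] W)
    (hexact : LinearMap.range (A : U →ₗ[ℝ] V) = LinearMap.ker (B : V →ₗ[ℝ] W))
    (hclosed : IsClosed (LinearMap.range (B : V →ₗ[ℝ] W) : Set W)) :
    ∃ α > (0:ℝ), ∀ c : V,
      α * (‖c‖ * ‖c‖) ≤ ‖adjoint A c‖ * ‖adjoint A c‖ + ‖B c‖ * ‖B c‖ := by
  set S : Submodule ℝ V := LinearMap.range (A : U →ₗ[ℝ] V) with hS
  have hScl : IsClosed (S : Set V) := hexact ▸ ContinuousLinearMap.isClosed_ker B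
  haveI : CompleteSpace S := hScl.completeSpace_coe
  obtain ⟨C₁, hC₁, hA⟩ := key_bounded_preimage A hScl
  obtain ⟨C₂, hC₂, hB⟩ := key_bounded_preimage B hclosed
  set C : ℝ := max C₁ C₂ with hC
  have hCpos : 0 < C := lt_max_of_lt_left hC₁
  -- bound on S
  have bd1 : ∀ v ∈ S, ‖v‖ ≤ C * ‖adjoint A v‖ := by
    intro v hv
    obtain ⟨u, hu, hnu⟩ := hA v hv
    have key : ‖v‖ * ‖v‖ ≤ C₁ * ‖v‖ * ‖adjoint A v‖ := by
      calc ‖v‖ * ‖v‖ = ⟪v, v⟫ := (real_inner_self_eq_norm_mul_norm v).symm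
        _ = ⟪A u, v⟫ := by rw [hu]
        _ = ⟪u, adjoint A v⟫ := (adjoint_inner_right A u v).symm
        _ ≤ ‖u‖ * ‖adjoint A v‖ := real_inner_le_norm _ _
        _ ≤ C₁ * ‖v‖ * ‖adjoint A v‖ :=
            mul_le_mul_of_nonneg_right hnu (norm_nonneg _)
    rcases eq_or_lt_of_le (norm_nonneg v) with h0 | h0
    · rw [← h0]; positivity
    · have h1 : ‖v‖ ≤ C₁ * ‖adjoint A v‖ := by nlinarith
      exact h1.trans (mul_le_mul_of_nonneg_right (le_max_left _ _) (norm_nonneg _))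
  -- bound on Sᗮ
  have bd2 : ∀ v ∈ Sᗮ, ‖v‖ ≤ C * ‖B v‖ := by
    intro v hv
    obtain ⟨x, hx, hnx⟩ := hB (B v) (LinearMap.mem_range_self _ v)
    have hmem : v - x ∈ S := by
      rw [hexact]
      simp [LinearMap.mem_ker, map_sub, hx]
    have key : ‖v‖ * ‖v‖ ≤ C₂ * ‖B v‖ * ‖v‖ := by
      have horth : ⟪v - x, v⟫ = 0 :=
        Submodule.inner_right_of_mem_orthogonal hmem hv
      calc ‖v‖ * ‖v‖ = ⟪v, v⟫ := (real_inner_self_eq_norm_mul_norm v).symm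
        _ = ⟪x, v⟫ := by
            have : ⟪v, v⟫ - ⟪x, v⟫ = 0 := by
              rw [← inner_sub_left]; exact horth
            linarith
        _ ≤ ‖x‖ * ‖v‖ := real_inner_le_norm _ _
        _ ≤ C₂ * ‖B v‖ * ‖v‖ := mul_le_mul_of_nonneg_right hnx (norm_nonneg _)
    rcases eq_or_lt_of_le (norm_nonneg v) with h0 | h0
    · rw [← h0]; positivity
    · have h1 : ‖v‖ ≤ C₂ * ‖B v‖ := by nlinarith
      exact h1.trans (mul_le_mul_of_nonneg_right (le_max_right _ _) (norm_nonneg _))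
  refine ⟨(C * C)⁻¹, by positivity, ?_⟩
  intro c
  set c₁ : V := (Submodule.orthogonalProjectionOnto S c : V) with hc₁
  set c₂ : V := c - c₁ with hc₂
  have hc₁S : c₁ ∈ S := Subtype.coe_prop _
  have hc₂S : c₂ ∈ Sᗮ := Submodule.sub_starProjection_mem_orthogonal c
  have hsum : c = c₁ + c₂ := by rw [hc₂]; abel
  have horth : ⟪c₁, c₂⟫ = 0 :=
    Submodule.inner_right_of_mem_orthogonal hc₁S hc₂S
  have hpyth : ‖c‖ * ‖c‖ = ‖c₁‖ * ‖c₁‖ + ‖c₂‖ * ‖c₂‖ := by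
    have := norm_add_sq_real c₁ c₂
    rw [horth] at this
    rw [hsum]
    nlinarith [this]
  have hAc : adjoint A c = adjoint A c₁ := by
    have h0 : adjoint A c₂ = 0 := by
      apply ext_inner_left ℝ
      intro u
      rw [adjoint_inner_right, inner_zero_right]
      exact Submodule.inner_right_of_mem_orthogonal (⟨u, rfl⟩ : A u ∈ S) hc₂S
    rw [hsum, map_add, h0, add_zero]
  have hBc : B c = B c₂ := by
    have h0 : B c₁ = 0 := by
      have : c₁ ∈ LinearMap.ker (B : V →ₗ[ℝ] W) := hexact ▸ hc₁S
      exact this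
    rw [hsum, map_add, h0, zero_add]
  have b1 : ‖c₁‖ ≤ C * ‖adjoint A c‖ := by rw [hAc]; exact bd1 c₁ hc₁S
  have b2 : ‖c₂‖ ≤ C * ‖B c‖ := by rw [hBc]; exact bd2 c₂ hc₂S
  have hCC : 0 < C * C := by positivity
  rw [inv_mul_le_iff₀ hCC, hpyth]
  nlinarith [norm_nonneg c₁, norm_nonneg c₂, norm_nonneg (adjoint A c), norm_nonneg (B c)]

set_option maxHeartbeats 1000000 in
/-- Perturbation statement: if `range A = ker B` and `range B` is closed, then
for all `A'`, `B'` close enough to `A`, `B` in operator norm, the mixed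
Laplacian `A ∘ (A')* + B* ∘ B'` is bijective; in particular any `c` with
`A((A')* c) = 0` and `B' c = 0` vanishes. -/
theorem perturbed_laplacian_bijective
    {U V W : Type*}
    [NormedAddCommGroup U] [InnerProductSpace ℝ U] [CompleteSpace U]
    [NormedAddCommGroup V] [InnerProductSpace ℝ V] [CompleteSpace V]
    [NormedAddCommGroup W] [InnerProductSpace ℝ W] [CompleteSpace W]
    (A : U →L[ℝ] V) (B : V →L[ℝ] W)
    (hexact : LinearMap.range (A : U →ₗ[ℝ] V) = LinearMap.ker (B : V →ₗ[ℝ] W))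
    (hclosed : IsClosed (LinearMap.range (B : V →ₗ[ℝ] W) : Set W)) :
    ∃ ε > (0 : ℝ), ∀ (A' : U →L[ℝ] V) (B' : V →L[ℝ] W),
      ‖A' - A‖ < ε → ‖B' - B‖ < ε →
      Function.Bijective
        (A.comp (ContinuousLinearMap.adjoint A') +
          (ContinuousLinearMap.adjoint B).comp B') ∧
      ∀ c : V, A (ContinuousLinearMap.adjoint A' c) = 0 → B' c = 0 → c = 0 := by
  obtain ⟨α, hα, hcoer⟩ := coercive_of_exact A B hexact hclosed
  set M : ℝ := ‖A‖ + ‖B‖ + 1 with hM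
  have hMpos : 0 < M := by positivity
  refine ⟨α / (2 * M), by positivity, ?_⟩
  intro A' B' hA' hB'
  set L : V →L[ℝ] V := A.comp (adjoint A') + (adjoint B).comp B' with hL
  have hcoer' : ∀ c : V, α / 2 * (‖c‖ * ‖c‖) ≤ ⟪L c, c⟫ := by
    intro c
    have hexp : ⟪L c, c⟫ = ⟪adjoint A c, adjoint A c⟫ + ⟪adjoint (A' - A) c, adjoint A c⟫
        + (⟪B c, B c⟫ + ⟪(B' - B) c, B c⟫) := by
      have e1 : ⟪A (adjoint A' c), c⟫ = ⟪adjoint A' c, adjoint A c⟫ :=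
        (adjoint_inner_right A _ _).symm
      have e2 : ⟪adjoint B (B' c), c⟫ = ⟪B' c, B c⟫ := adjoint_inner_left B _ _
      have e3 : adjoint A' c = adjoint A c + adjoint (A' - A) c := by
        have : adjoint (A' - A) = adjoint A' - adjoint A := by
          simp [map_sub]
        rw [this]; simp
      have e4 : B' c = B c + (B' - B) c := by simp
      calc ⟪L c, c⟫ = ⟪A (adjoint A' c), c⟫ + ⟪adjoint B (B' c), c⟫ := by
            simp [hL, inner_add_left]
        _ = ⟪adjoint A' c, adjoint A c⟫ + ⟪B' c, B c⟫ := by rw [e1, e2]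
        _ = ⟪adjoint A c, adjoint A c⟫ + ⟪adjoint (A' - A) c, adjoint A c⟫
            + (⟪B c, B c⟫ + ⟪(B' - B) c, B c⟫) := by
            nth_rewrite 1 [e3]; nth_rewrite 1 [e4]
            rw [inner_add_left, inner_add_left]
    have n1 : ‖adjoint (A' - A)‖ = ‖A' - A‖ :=
      LinearIsometryEquiv.norm_map (adjoint (𝕜 := ℝ)) (A' - A)
    have n2 : ‖(adjoint A : V →L[ℝ] U)‖ = ‖A‖ :=
      LinearIsometryEquiv.norm_map (adjoint (𝕜 := ℝ)) A
    have hadA : ‖adjoint (A' - A) c‖ ≤ ‖A' - A‖ * ‖c‖ := by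
      rw [← n1]; exact (adjoint (A' - A)).le_opNorm c
    have hAc2 : ‖adjoint A c‖ ≤ ‖A‖ * ‖c‖ := by
      rw [← n2]; exact (adjoint A).le_opNorm c
    have hBc2 : ‖B c‖ ≤ ‖B‖ * ‖c‖ := B.le_opNorm c
    have hB'B : ‖(B' - B) c‖ ≤ ‖B' - B‖ * ‖c‖ := (B' - B).le_opNorm c
    have hX : |⟪adjoint (A' - A) c, adjoint A c⟫| ≤ (‖A' - A‖ * ‖c‖) * (‖A‖ * ‖c‖) :=
      (abs_real_inner_le_norm _ _).trans
        (mul_le_mul hadA hAc2 (norm_nonneg _) (by positivity))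
    have hY : |⟪(B' - B) c, B c⟫| ≤ (‖B' - B‖ * ‖c‖) * (‖B‖ * ‖c‖) :=
      (abs_real_inner_le_norm _ _).trans
        (mul_le_mul hB'B hBc2 (norm_nonneg _) (by positivity))
    have hs1 : ⟪adjoint A c, adjoint A c⟫ = ‖adjoint A c‖ * ‖adjoint A c‖ :=
      real_inner_self_eq_norm_mul_norm _
    have hs2 : ⟪B c, B c⟫ = ‖B c‖ * ‖B c‖ := real_inner_self_eq_norm_mul_norm _
    have hcc := hcoer c
    have hεM : α / (2 * M) * M = α / 2 := by field_simp
    have hAn : (0:ℝ) ≤ ‖A‖ := norm_nonneg _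
    have hBn : (0:ℝ) ≤ ‖B‖ := norm_nonneg _
    have hcn : (0:ℝ) ≤ ‖c‖ := norm_nonneg _
    obtain ⟨hX1, hX2⟩ := abs_le.mp hX
    obtain ⟨hY1, hY2⟩ := abs_le.mp hY
    have hA'le : ‖A' - A‖ ≤ α / (2 * M) := hA'.le
    have hB'le : ‖B' - B‖ ≤ α / (2 * M) := hB'.le
    have hε : (0:ℝ) < α / (2 * M) := by positivity
    have hAM : ‖A‖ + ‖B‖ ≤ M := by rw [hM]; linarith
    have t1 : ‖A' - A‖ * ‖c‖ * (‖A‖ * ‖c‖) ≤ α / (2 * M) * (‖A‖ * (‖c‖ * ‖c‖)) := by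
      nlinarith [mul_nonneg hAn (mul_self_nonneg ‖c‖)]
    have t2 : ‖B' - B‖ * ‖c‖ * (‖B‖ * ‖c‖) ≤ α / (2 * M) * (‖B‖ * (‖c‖ * ‖c‖)) := by
      nlinarith [mul_nonneg hBn (mul_self_nonneg ‖c‖)]
    have t3 : α / (2 * M) * (‖A‖ * (‖c‖ * ‖c‖)) + α / (2 * M) * (‖B‖ * (‖c‖ * ‖c‖))
        ≤ α / 2 * (‖c‖ * ‖c‖) := by
      have : α / (2 * M) * (‖A‖ * (‖c‖ * ‖c‖)) + α / (2 * M) * (‖B‖ * (‖c‖ * ‖c‖))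
          = α / (2 * M) * (‖A‖ + ‖B‖) * (‖c‖ * ‖c‖) := by ring
      rw [this, ← hεM]
      have h4 : α / (2 * M) * (‖A‖ + ‖B‖) ≤ α / (2 * M) * M :=
        mul_le_mul_of_nonneg_left hAM hε.le
      exact mul_le_mul_of_nonneg_right h4 (mul_self_nonneg ‖c‖)
    linarith [hcc, hX1, hY1, t1, t2, t3, hexp, hs1, hs2]
  constructor
  · exact bijective_of_inner_coercive L (by positivity) hcoer'
  · intro c h1 h2
    have hLc : L c = 0 := by
      simp [hL, h1, h2]
    have hinj := (bijective_of_inner_coercive L (by positivity : (0:ℝ) < α/2) hcoer').injective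
    have : L c = L 0 := by simp [hLc]
    simpa using hinj this
end

section
/- Let T be a finite-dimensional real vector space and let π : T* → T be a linear map from the dual space of T to T which is skew-symmetric, i.e. ξ(π(η)) = −η(π(ξ)) for all ξ, η ∈ T*. Let V ⊆ T be a subspace such that T = V ⊕ π(V⁰), where V⁰ ⊆ T* denotes the annihilator of V and π(V⁰) its image under π, and let W ⊆ T be a subspace with T = V ⊕ W. Then the range of π equals W if and only if π(V⁰) = W and the kernel of π equals the annihilator W⁰ ⊆ T* of W. -/
/-- Pointwise linear algebra of symplectic leaves: let `π : T* → T` be a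
skew-symmetric linear map on a finite-dimensional real vector space, let
`V ⊆ T` be a subspace with `T = V ⊕ π(V⁰)` and `W ⊆ T` a subspace with
`T = V ⊕ W`. Then `range π = W` iff `π(V⁰) = W` and `ker π = W⁰`. -/
theorem range_eq_iff_graph_leaf
    {T : Type*} [AddCommGroup T] [Module ℝ T] [FiniteDimensional ℝ T]
    (π : Module.Dual ℝ T →ₗ[ℝ] T)
    (hskew : ∀ ξ η : Module.Dual ℝ T, ξ (π η) = - η (π ξ))
    (V W : Submodule ℝ T)
    (hVhor : IsCompl V (Submodule.map π V.dualAnnihilator))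
    (hVW : IsCompl V W) :
    LinearMap.range π = W ↔
      (Submodule.map π V.dualAnnihilator = W ∧
        LinearMap.ker π = W.dualAnnihilator) := by
  have hker : LinearMap.ker π = (LinearMap.range π).dualAnnihilator := by
    ext ξ
    simp only [LinearMap.mem_ker, Submodule.mem_dualAnnihilator]
    constructor
    · rintro h x ⟨η, rfl⟩
      rw [hskew, h]; simp
    · intro h
      rw [← Module.forall_dual_apply_eq_zero_iff ℝ (π ξ)]
      intro η
      rw [hskew]
      simp [h (π η) ⟨η, rfl⟩]
  constructor
  · intro hrange
    have hmapW : Submodule.map π V.dualAnnihilator = W := by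
      have hle : Submodule.map π V.dualAnnihilator ≤ W := by
        rw [← hrange]; exact LinearMap.map_le_range
      exact (eq_of_le_of_inf_le_of_sup_le hle
        (by rw [inf_comm W V, hVW.inf_eq_bot]; exact bot_le)
        (by rw [sup_comm W V, hVW.sup_eq_top, sup_comm _ V, hVhor.sup_eq_top]))
    exact ⟨hmapW, by rw [hker, hrange]⟩
  · rintro ⟨-, hkerW⟩
    have := hker.symm.trans hkerW
    exact Subspace.dualAnnihilator_inj.mp this
end
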